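/- Let q be a prime power and let R = ℚ. In the free ℚ-algebra generated by symbols x_k for k ∈ ℤ subject to the relations x_{k+1}·x_k - q^{-1}·x_k·x_{k+1} = q - 1 for all k, and x_{k+m}·x_k = q^{(-1)^m}·x_k·x_{k+m} for all k ∈ ℤ and m ≥ 2, the monomials x_{k_1}·x_{k_2}···x_{k_r} with k_1 ≥ k_2 ≥ ... ≥ k_r form a spanning set. -/

import Mathlib

open FreeAlgebra

/-- The defining relations of the Hall algebra of `Perf(F_q)`:
`x_{k+1}·x_k - q⁻¹·x_k·x_{k+1} = q - 1` and `x_{k+m}·x_k = q^{(-1)^m}·x_k·x_{k+m}`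
for `m ≥ 2`. -/
inductive HallRel (q : ℚ) : FreeAlgebra ℚ ℤ → FreeAlgebra ℚ ℤ → Prop
  | hecke (k : ℤ) :
      HallRel q (ι ℚ (k + 1) * ι ℚ k - q⁻¹ • (ι ℚ k * ι ℚ (k + 1)))
        (algebraMap ℚ (FreeAlgebra ℚ ℤ) (q - 1))
  | comm (k : ℤ) (m : ℕ) (hm : 2 ≤ m) :
      HallRel q (ι ℚ (k + (m : ℤ)) * ι ℚ k)
        ((q ^ ((-1 : ℤ) ^ m)) • (ι ℚ k * ι ℚ (k + (m : ℤ))))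

noncomputable def Xg (q : ℚ) (k : ℤ) : RingQuot (HallRel q) :=
  RingQuot.mkAlgHom ℚ (HallRel q) (ι ℚ k)

/-- bounded ordered monomials -/
def OrdSet (q : ℚ) (b : ℤ) : Set (RingQuot (HallRel q)) :=
  { x | ∃ ls : List ℤ, ls.Chain' (· ≥ ·) ∧ (∀ a ∈ ls, a ≤ b) ∧ x = (ls.map (Xg q)).prod }

lemma swap_lemma (q : ℚ) (hq0 : q ≠ 0) {k a : ℤ} (h : k < a) :
    ∃ c d : ℚ, Xg q k * Xg q a = c • (Xg q a * Xg q k) + d • 1 := by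
  set m : ℕ := (a - k).toNat with hm
  have ha : a = k + (m : ℤ) := by
    have : ((m : ℤ)) = a - k := Int.toNat_of_nonneg (by omega)
    omega
  have hm1 : 1 ≤ m := by omega
  rcases eq_or_lt_of_le hm1 with h1 | h2
  · -- m = 1, hecke
    have ha1 : a = k + 1 := by omega
    subst ha1
    have := RingQuot.mkAlgHom_rel ℚ (HallRel.hecke (q := q) k)
    rw [map_sub, map_mul, map_smul, map_mul, AlgHom.commutes] at this
    -- this : Xg q (k+1) * Xg q k - q⁻¹ • (Xg q k * Xg q (k+1)) = algebraMap ℚ _ (q-1)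
    refine ⟨q, -(q * (q - 1)), ?_⟩
    have hthis : Xg q (k + 1) * Xg q k - q⁻¹ • (Xg q k * Xg q (k + 1)) = (q - 1) • 1 := by
      simpa [Xg, Algebra.algebraMap_eq_smul_one] using this
    have h2 : q⁻¹ • (Xg q k * Xg q (k + 1))
        = Xg q (k + 1) * Xg q k - (q - 1) • 1 := by
      rw [← hthis]; abel
    have h3 : q • (q⁻¹ • (Xg q k * Xg q (k + 1))) = Xg q k * Xg q (k + 1) := by
      rw [smul_smul, mul_inv_cancel₀ hq0, one_smul]
    calc Xg q k * Xg q (k + 1)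
        = q • (q⁻¹ • (Xg q k * Xg q (k + 1))) := h3.symm
      _ = q • (Xg q (k + 1) * Xg q k - (q - 1) • 1) := by rw [h2]
      _ = q • (Xg q (k + 1) * Xg q k) + (-(q * (q - 1))) • 1 := by
          rw [smul_sub, smul_smul]
          ring_nf
          rw [sub_eq_add_neg, ← neg_smul]
          ring_nf
  · -- m ≥ 2, comm
    have := RingQuot.mkAlgHom_rel ℚ (HallRel.comm (q := q) k m h2)
    rw [map_mul, map_smul, map_mul] at this
    set e : ℚ := q ^ ((-1 : ℤ) ^ m) with he
    have he0 : e ≠ 0 := zpow_ne_zero _ hq0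
    refine ⟨e⁻¹, 0, ?_⟩
    rw [zero_smul, add_zero, ha]
    have : Xg q (k + (m : ℤ)) * Xg q k = e • (Xg q k * Xg q (k + (m : ℤ))) := this
    rw [this, smul_smul, inv_mul_cancel₀ he0, one_smul]

lemma chain_cons {a : ℤ} {ls : List ℤ} (hch : ls.Chain' (· ≥ ·))
    (hle : ∀ x ∈ ls, x ≤ a) : (a :: ls).Chain' (· ≥ ·) := by
  rw [List.Chain', List.isChain_cons]
  exact ⟨fun y hy => hle y (List.mem_of_mem_head? hy), hch⟩

lemma chain_tail_le {a : ℤ} {ls : List ℤ} (hch : (a :: ls).Chain' (· ≥ ·)) :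
    ∀ x ∈ ls, x ≤ a := by
  have : (a :: ls).Pairwise (· ≥ ·) := (List.isChain_iff_pairwise).mp hch
  exact fun x hx => (List.pairwise_cons.mp this).1 x hx

lemma mulL (q : ℚ) {a b : ℤ} (hab : a ≤ b) {y : RingQuot (HallRel q)}
    (hy : y ∈ Submodule.span ℚ (OrdSet q a)) :
    Xg q a * y ∈ Submodule.span ℚ (OrdSet q b) := by
  have hle : Submodule.span ℚ (OrdSet q a) ≤
      (Submodule.span ℚ (OrdSet q b)).comap (LinearMap.mulLeft ℚ (Xg q a)) := by
    rw [Submodule.span_le]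
    rintro x ⟨ls, hch, hb, rfl⟩
    refine Submodule.subset_span ⟨a :: ls, chain_cons hch hb, ?_, ?_⟩
    · intro x hx
      rcases List.mem_cons.mp hx with rfl | hx
      · exact hab
      · exact le_trans (hb x hx) hab
    · simp [LinearMap.mulLeft_apply]
  exact hle hy

lemma key (q : ℚ) (hq0 : q ≠ 0) :
    ∀ (ls : List ℤ) (b k : ℤ), ls.Chain' (· ≥ ·) → (∀ x ∈ ls, x ≤ b) → k ≤ b →
      Xg q k * (ls.map (Xg q)).prod ∈ Submodule.span ℚ (OrdSet q b) := by
  intro ls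
  induction ls with
  | nil =>
    intro b k _ _ hk
    refine Submodule.subset_span ⟨[k], ?_, ?_, ?_⟩ <;> simp [hk, List.Chain']
  | cons a rest ih =>
    intro b k hch hb hk
    by_cases hka : a ≤ k
    · refine Submodule.subset_span ⟨k :: a :: rest, ?_, ?_, ?_⟩
      · exact List.isChain_cons_cons.mpr ⟨hka, hch⟩
      · intro x hx
        rcases List.mem_cons.mp hx with rfl | hx
        · exact hk
        · exact hb x hx
      · simp [mul_assoc]
    · push_neg at hka
      have hresta : ∀ x ∈ rest, x ≤ a := chain_tail_le hch
      have hab : a ≤ b := hb a (by simp)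
      obtain ⟨c, d, hcd⟩ := swap_lemma q hq0 hka
      have hrest : Xg q k * (rest.map (Xg q)).prod ∈ Submodule.span ℚ (OrdSet q a) :=
        ih a k hch.tail hresta hka.le
      have h1 : Xg q a * (Xg q k * (rest.map (Xg q)).prod) ∈
          Submodule.span ℚ (OrdSet q b) := mulL q hab hrest
      have h2 : (rest.map (Xg q)).prod ∈ Submodule.span ℚ (OrdSet q b) :=
        Submodule.subset_span ⟨rest, hch.tail, fun x hx => le_trans (hresta x hx) hab, rfl⟩
      have heq : Xg q k * ((a :: rest).map (Xg q)).prod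
          = c • (Xg q a * (Xg q k * (rest.map (Xg q)).prod)) + d • (rest.map (Xg q)).prod := by
        simp only [List.map_cons, List.prod_cons, ← mul_assoc, hcd]
        rw [add_mul, smul_mul_assoc, smul_mul_assoc, one_mul, mul_assoc]
      rw [heq]
      exact Submodule.add_mem _ (Submodule.smul_mem _ _ h1) (Submodule.smul_mem _ _ h2)

def TSet (q : ℚ) : Set (RingQuot (HallRel q)) :=
  { x | ∃ ls : List ℤ, ls.Chain' (· ≥ ·) ∧ x = (ls.map (Xg q)).prod }

lemma foldr_max_le (k : ℤ) : ∀ ls : List ℤ,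
    k ≤ ls.foldr max k ∧ ∀ x ∈ ls, x ≤ ls.foldr max k := by
  intro ls
  induction ls with
  | nil => simp
  | cons a t ih =>
    refine ⟨le_trans ih.1 ?_, ?_⟩
    · simp [List.foldr_cons, le_max_iff]
    · intro x hx
      rcases List.mem_cons.mp hx with rfl | hx
      · simp [List.foldr_cons, le_max_iff]
      · exact le_trans (ih.2 x hx) (by simp [List.foldr_cons, le_max_iff])

lemma ordset_subset_T (q : ℚ) (b : ℤ) : OrdSet q b ⊆ TSet q := by
  rintro x ⟨ls, hch, _, rfl⟩
  exact ⟨ls, hch, rfl⟩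

lemma mulT (q : ℚ) (hq0 : q ≠ 0) (k : ℤ) {y : RingQuot (HallRel q)}
    (hy : y ∈ Submodule.span ℚ (TSet q)) :
    Xg q k * y ∈ Submodule.span ℚ (TSet q) := by
  have hle : Submodule.span ℚ (TSet q) ≤
      (Submodule.span ℚ (TSet q)).comap (LinearMap.mulLeft ℚ (Xg q k)) := by
    rw [Submodule.span_le]
    rintro x ⟨ls, hch, rfl⟩
    have hfold := foldr_max_le k ls
    have := key q hq0 ls (ls.foldr max k) k hch hfold.2 hfold.1
    simpa [LinearMap.mulLeft_apply] using
      Submodule.span_mono (ordset_subset_T q (ls.foldr max k)) this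
  exact hle hy

lemma prodMulT (q : ℚ) (hq0 : q ≠ 0) (ls : List ℤ) {y : RingQuot (HallRel q)}
    (hy : y ∈ Submodule.span ℚ (TSet q)) :
    (ls.map (Xg q)).prod * y ∈ Submodule.span ℚ (TSet q) := by
  induction ls with
  | nil => simpa using hy
  | cons a t ih =>
    simp only [List.map_cons, List.prod_cons, mul_assoc]
    exact mulT q hq0 a ih

lemma mulTT (q : ℚ) (hq0 : q ≠ 0) {y z : RingQuot (HallRel q)}
    (hy : y ∈ Submodule.span ℚ (TSet q)) (hz : z ∈ Submodule.span ℚ (TSet q)) :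
    y * z ∈ Submodule.span ℚ (TSet q) := by
  induction hy using Submodule.span_induction with
  | mem x hx =>
    obtain ⟨ls, hch, rfl⟩ := hx
    exact prodMulT q hq0 ls hz
  | zero => simp
  | add a b _ _ ha hb => rw [add_mul]; exact Submodule.add_mem _ ha hb
  | smul c a _ ha => rw [smul_mul_assoc]; exact Submodule.smul_mem _ _ ha

/-- The ordered monomials `x_{k_1}⋯x_{k_r}` with `k_1 ≥ … ≥ k_r` span the Hall
algebra of `Perf(F_q)` over `ℚ`. -/
theorem stmt15 (q : ℚ) (hq : ∃ p n : ℕ, Nat.Prime p ∧ 0 < n ∧ q = (p : ℚ) ^ n) :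
    Submodule.span ℚ
        {x : RingQuot (HallRel q) |
          ∃ ls : List ℤ, ls.Chain' (· ≥ ·) ∧
            x = (ls.map fun k => RingQuot.mkAlgHom ℚ (HallRel q) (ι ℚ k)).prod} = ⊤ := by
  have hq0 : q ≠ 0 := by
    obtain ⟨p, n, hp, hn, rfl⟩ := hq
    have hp0 : (0 : ℚ) < (p : ℚ) := by exact_mod_cast hp.pos
    exact ne_of_gt (pow_pos hp0 n)
  have hT : {x : RingQuot (HallRel q) |
      ∃ ls : List ℤ, ls.Chain' (· ≥ ·) ∧
        x = (ls.map fun k => RingQuot.mkAlgHom ℚ (HallRel q) (ι ℚ k)).prod} = TSet q := rfl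
  rw [hT, eq_top_iff]
  rintro x -
  obtain ⟨w, rfl⟩ := RingQuot.mkAlgHom_surjective ℚ (HallRel q) x
  induction w using FreeAlgebra.induction with
  | grade0 r =>
    rw [AlgHom.commutes]
    rw [Algebra.algebraMap_eq_smul_one]
    exact Submodule.smul_mem _ _ (Submodule.subset_span ⟨[], by simp [List.Chain'], by simp⟩)
  | grade1 k =>
    exact Submodule.subset_span ⟨[k], by simp [List.Chain'], by simp [Xg]⟩
  | mul a b ha hb =>
    rw [map_mul]
    exact mulTT q hq0 ha hb
  | add a b ha hb =>
    rw [map_add]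
    exact Submodule.add_mem _ ha hb
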